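/- If M is a Mittag-Leffler right R-module and, for each λ, L_λ is an (R,S)-bimodule, then the canonical map M⊗_R(∏_λ L_λ) → ∏_λ (M⊗_R L_λ) is a pure embedding of right S-modules. -/

import Mathlib

/-!
Core framework for formalizing statements from
"Tensor and direct extension of definable subcategories" (M. Prest).

Conventions:
* A *right* `R`-module is a type with `[AddCommGroup M] [Module Rᵐᵒᵖ M]`;
  the right action of `r : R` on `a : M` is `MulOpposite.op r • a`.
* A *left* `R`-module is a type with `[AddCommGroup L] [Module R L]`.
* An `(R,S)`-bimodule is a type with a left `R`-action and a right `S`-action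
  which commute: `[Module R B] [Module Sᵐᵒᵖ B] [SMulCommClass R Sᵐᵒᵖ B]`.
-/

open MulOpposite

universe u v

namespace MTM

/-- A pp formula for (right) `R`-modules, with free variables indexed by `ι`,
bound variables indexed by `κ` and equations indexed by `ε`:
`∃ ȳ (x̄ A + ȳ B = 0)`. -/
structure PP (R : Type u) [Ring R] (ι : Type) : Type (max u 1) where
  κ : Type
  ε : Type
  [fintκ : Fintype κ]
  [fintε : Fintype ε]
  A : Matrix ι ε R
  B : Matrix κ ε R

attribute [instance] PP.fintκ PP.fintε

namespace PP

variable {R : Type u} [Ring R] {S : Type u} [Ring S] {ι : Type} [Fintype ι]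

/-- The solution set of a pp formula in a right `R`-module. -/
def sol (φ : PP R ι) (M : Type v) [AddCommGroup M] [Module Rᵐᵒᵖ M] : Set (ι → M) :=
  { a | ∃ b : φ.κ → M, ∀ j : φ.ε,
      (∑ i, op (φ.A i j) • a i) + (∑ k, op (φ.B k j) • b k) = 0 }

/-- The solution set of a pp formula in a left `R`-module (the formula is then read
with coefficients acting on the left). -/
def solL (φ : PP R ι) (L : Type v) [AddCommGroup L] [Module R L] : Set (ι → L) :=
  { a | ∃ b : φ.κ → L, ∀ j : φ.ε,
      (∑ i, φ.A i j • a i) + (∑ k, φ.B k j • b k) = 0 }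

/-- `φ ≤ ψ` : every solution of `φ` is a solution of `ψ`, in every right `R`-module. -/
def Le (φ ψ : PP R ι) : Prop :=
  ∀ (M : Type u) [AddCommGroup M] [Module Rᵐᵒᵖ M], φ.sol M ⊆ ψ.sol M

/-- The elementary dual `Dφ = ∃ z̄ (x̄ = A z̄ ∧ B z̄ = 0)` of a pp formula for right modules;
it is a pp formula for left `R`-modules (to be interpreted via `solL`). -/
noncomputable def dual (φ : PP R ι) : PP R ι where
  κ := φ.ε
  ε := ι ⊕ φ.κ
  A := fun i e =>
    letI := Classical.decEq ι
    Sum.elim (fun i' => if i = i' then (1 : R) else 0) (fun _ => (0 : R)) e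
  B := fun z e => Sum.elim (fun i' => -(φ.A i' z)) (fun k => φ.B k z) e

/-- Transport of a pp formula along a ring homomorphism (`f⁎φ`). -/
def map (f : R →+* S) (φ : PP R ι) : PP S ι :=
  { κ := φ.κ, ε := φ.ε, A := fun i j => f (φ.A i j), B := fun k j => f (φ.B k j) }

end PP

variable (R : Type u) [Ring R] (S : Type u) [Ring S]

/-- A pp-pair `φ/ψ` for right `R`-modules: pp formulas (in `n` free variables)
with `ψ(M) ≤ φ(M)` for every right `R`-module `M`. -/
structure PPPair : Type (u + 1) where
  n : ℕ
  num : PP R (Fin n)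
  den : PP R (Fin n)
  le : ∀ (M : Type u) [AddCommGroup M] [Module Rᵐᵒᵖ M], den.sol M ⊆ num.sol M

/-- A pp-pair for left `R`-modules. -/
structure PPPairL : Type (u + 1) where
  n : ℕ
  num : PP R (Fin n)
  den : PP R (Fin n)
  le : ∀ (L : Type u) [AddCommGroup L] [Module R L], den.solL L ⊆ num.solL L

variable {R}

/-- A pp-pair is closed on a right module `M` if the two solution sets agree. -/
def PPPair.ClosedOn (p : PPPair R) (M : Type v) [AddCommGroup M] [Module Rᵐᵒᵖ M] : Prop :=
  p.num.sol M = p.den.sol M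

/-- A pp-pair is closed on a left module `L` if the two solution sets agree. -/
def PPPairL.ClosedOn (p : PPPairL R) (L : Type v) [AddCommGroup L] [Module R L] : Prop :=
  p.num.solL L = p.den.solL L

variable (R)

/-- The subcategory (class of modules, as a set of objects of `Mod-R`) defined by
closure of a set of pp-pairs. -/
def definedBy (Φ : Set (PPPair R)) : Set (ModuleCat.{u} Rᵐᵒᵖ) :=
  { M | ∀ p ∈ Φ, p.ClosedOn M }

/-- The subcategory of left modules defined by closure of a set of pp-pairs. -/
def definedByL (Φ : Set (PPPairL R)) : Set (ModuleCat.{u} R) :=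
  { L | ∀ p ∈ Φ, p.ClosedOn L }

/-- A class of right `R`-modules is a definable subcategory if it is the class of
modules on which each pp-pair in some set of pp-pairs is closed. -/
def IsDefinable (D : Set (ModuleCat.{u} Rᵐᵒᵖ)) : Prop :=
  ∃ Φ : Set (PPPair R), D = definedBy R Φ

/-- Definability for classes of left `R`-modules. -/
def IsDefinableL (D : Set (ModuleCat.{u} R)) : Prop :=
  ∃ Φ : Set (PPPairL R), D = definedByL R Φ

/-- `⟨X⟩`: the smallest definable subcategory of `Mod-R` containing `X`. -/
def gen (X : Set (ModuleCat.{u} Rᵐᵒᵖ)) : Set (ModuleCat.{u} Rᵐᵒᵖ) :=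
  ⋂₀ { D | IsDefinable R D ∧ X ⊆ D }

/-- `⟨X⟩` for classes of left modules. -/
def genL (X : Set (ModuleCat.{u} R)) : Set (ModuleCat.{u} R) :=
  ⋂₀ { D | IsDefinableL R D ∧ X ⊆ D }

/-- `φ ≤_𝒳 ψ` for a class `𝒳` of right `R`-modules. -/
def LeOn (𝒳 : Set (ModuleCat.{u} Rᵐᵒᵖ)) {ι : Type} [Fintype ι] (φ ψ : PP R ι) : Prop :=
  ∀ M ∈ 𝒳, φ.sol M ⊆ ψ.sol M

/-- A pure embedding of right `R`-modules: an injective linear map which reflects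
solution sets of pp formulas. -/
def IsPureEmb {M N : Type*} [AddCommGroup M] [Module Rᵐᵒᵖ M]
    [AddCommGroup N] [Module Rᵐᵒᵖ N] (f : M →ₗ[Rᵐᵒᵖ] N) : Prop :=
  Function.Injective f ∧
    ∀ (ι : Type) (_ : Fintype ι) (φ : PP R ι) (a : ι → M),
      (fun i => f (a i)) ∈ φ.sol N → a ∈ φ.sol M

/-- A pure-injective module: every pure embedding out of it splits. -/
def IsPureInj (N : Type u) [AddCommGroup N] [Module Rᵐᵒᵖ N] : Prop :=
  ∀ (M : Type u) [AddCommGroup M] [Module Rᵐᵒᵖ M] (g : N →ₗ[Rᵐᵒᵖ] M),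
    IsPureEmb R g → ∃ h : M →ₗ[Rᵐᵒᵖ] N, h.comp g = LinearMap.id

/-- `N` is an elementary cogenerator for the definable subcategory `D`:
a pure-injective member of `D` such that every member of `D` purely embeds in a
direct power of `N`. -/
def IsElemCogen (D : Set (ModuleCat.{u} Rᵐᵒᵖ)) (N : ModuleCat.{u} Rᵐᵒᵖ) : Prop :=
  N ∈ D ∧ IsPureInj R N ∧
    ∀ M ∈ D, ∃ (I : Type u) (g : M →ₗ[Rᵐᵒᵖ] (I → N)), IsPureEmb R g

/-- A pure-injective hull of `X`: a minimal pure embedding into a pure-injective. -/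
def IsPureInjHull {X H : Type u} [AddCommGroup X] [Module Rᵐᵒᵖ X]
    [AddCommGroup H] [Module Rᵐᵒᵖ H] (h : X →ₗ[Rᵐᵒᵖ] H) : Prop :=
  IsPureEmb R h ∧ IsPureInj R H ∧
    ∀ (Y : Type u) [AddCommGroup Y] [Module Rᵐᵒᵖ Y] (g : H →ₗ[Rᵐᵒᵖ] Y),
      IsPureEmb R (g.comp h) → IsPureEmb R g

section RingHom

variable (f : R →+* S)

/-- Restriction of scalars of a (bundled) right `S`-module along `f : R →+* S`. -/
noncomputable def resMod (M : ModuleCat.{u} Sᵐᵒᵖ) : ModuleCat.{u} Rᵐᵒᵖ :=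
  (ModuleCat.restrictScalars (RingHom.op f)).obj M

/-- The (definable) restriction `C|_R` of a definable subcategory `C` of `Mod-S`
along `f : R → S` : the subcategory of `Mod-R` defined by all pp-pairs `φ/ψ` for
`R`-modules such that `f⁎φ/f⁎ψ` is closed on `C`. -/
def restrictSubcat (C : Set (ModuleCat.{u} Sᵐᵒᵖ)) : Set (ModuleCat.{u} Rᵐᵒᵖ) :=
  definedBy R { p : PPPair R | ∀ M ∈ C, (p.num.map f).sol M = (p.den.map f).sol M }

/-- The definable trace of `Mod-S` in `Mod-R` along `f`. -/
def DefTr : Set (ModuleCat.{u} Rᵐᵒᵖ) := restrictSubcat R S f Set.univ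

/-- The direct extension `D^S` of a definable subcategory `D` of `Mod-R`:
those `S`-modules whose restriction along `f` lies in `D`. -/
def directExt (D : Set (ModuleCat.{u} Rᵐᵒᵖ)) : Set (ModuleCat.{u} Sᵐᵒᵖ) :=
  { M | resMod R S f M ∈ D }

end RingHom

end MTM
-- Tensor product over a (possibly noncommutative) ring.
namespace MTM

open MulOpposite TensorProduct

universe x
variable (R : Type u) [Ring R] (S : Type u) [Ring S]

section Tensor

variable (M : Type u) [AddCommGroup M] [Module Rᵐᵒᵖ M]
variable (B : Type u) [AddCommGroup B] [Module R B]

/-- The subgroup of `M ⊗_ℤ B` of balancing relations. -/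
def tensorRel : Submodule ℤ (TensorProduct ℤ M B) :=
  Submodule.span ℤ
    { x | ∃ (r : R) (m : M) (b : B), x = (op r • m) ⊗ₜ[ℤ] b - m ⊗ₜ[ℤ] (r • b) }

/-- The tensor product `M ⊗_R B` of a right `R`-module and a left `R`-module,
as the quotient of `M ⊗_ℤ B` by the balancing relations. -/
abbrev RTensor : Type u := TensorProduct ℤ M B ⧸ tensorRel R M B

/-- `m ⊗ b` in `M ⊗_R B`. -/
noncomputable def rtmul (m : M) (b : B) : RTensor R M B := Submodule.Quotient.mk (m ⊗ₜ[ℤ] b)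

variable {M B}
variable {M' : Type u} [AddCommGroup M'] [Module Rᵐᵒᵖ M']
variable {B' : Type u} [AddCommGroup B'] [Module R B']

theorem rel_le_B (g : B →ₗ[R] B') :
    tensorRel R M B ≤
      (tensorRel R M B').comap (LinearMap.lTensor M g.toAddMonoidHom.toIntLinearMap) := by
  refine Submodule.span_le.mpr ?_
  rintro x ⟨r, m, b, rfl⟩
  change LinearMap.lTensor M g.toAddMonoidHom.toIntLinearMap
    ((op r • m) ⊗ₜ[ℤ] b - m ⊗ₜ[ℤ] (r • b)) ∈ tensorRel R M B'
  have hx : LinearMap.lTensor M g.toAddMonoidHom.toIntLinearMap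
      ((op r • m) ⊗ₜ[ℤ] b - m ⊗ₜ[ℤ] (r • b)) = (op r • m) ⊗ₜ[ℤ] g b - m ⊗ₜ[ℤ] (r • g b) := by
    simp only [map_sub, LinearMap.lTensor_tmul,
      AddMonoidHom.coe_toIntLinearMap, LinearMap.toAddMonoidHom_coe]
    rw [g.map_smul]
  rw [hx]
  exact Submodule.subset_span ⟨r, m, g b, rfl⟩

theorem rel_le_M (h : M →ₗ[Rᵐᵒᵖ] M') :
    tensorRel R M B ≤
      (tensorRel R M' B).comap (LinearMap.rTensor B h.toAddMonoidHom.toIntLinearMap) := by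
  refine Submodule.span_le.mpr ?_
  rintro x ⟨r, m, b, rfl⟩
  change LinearMap.rTensor B h.toAddMonoidHom.toIntLinearMap
    ((op r • m) ⊗ₜ[ℤ] b - m ⊗ₜ[ℤ] (r • b)) ∈ tensorRel R M' B
  have hx : LinearMap.rTensor B h.toAddMonoidHom.toIntLinearMap
      ((op r • m) ⊗ₜ[ℤ] b - m ⊗ₜ[ℤ] (r • b)) = (op r • h m) ⊗ₜ[ℤ] b - h m ⊗ₜ[ℤ] (r • b) := by
    simp only [map_sub, LinearMap.rTensor_tmul,
      AddMonoidHom.coe_toIntLinearMap, LinearMap.toAddMonoidHom_coe]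
    rw [h.map_smul]
  rw [hx]
  exact Submodule.subset_span ⟨r, h m, b, rfl⟩

/-- Functoriality of `M ⊗_R -` in left `R`-module maps (as a `ℤ`-linear map). -/
noncomputable def mapB (g : B →ₗ[R] B') : RTensor R M B →ₗ[ℤ] RTensor R M B' :=
  Submodule.mapQ _ _ _ (rel_le_B R g)

/-- Functoriality of `- ⊗_R B` in right `R`-module maps (as a `ℤ`-linear map). -/
noncomputable def mapM (h : M →ₗ[Rᵐᵒᵖ] M') : RTensor R M B →ₗ[ℤ] RTensor R M' B :=
  Submodule.mapQ _ _ _ (rel_le_M R h)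

@[simp] theorem mapB_mk (g : B →ₗ[R] B') (y : TensorProduct ℤ M B) :
    mapB R g (Submodule.Quotient.mk y) =
      Submodule.Quotient.mk (LinearMap.lTensor M g.toAddMonoidHom.toIntLinearMap y) :=
  rfl

@[simp] theorem mapM_mk (h : M →ₗ[Rᵐᵒᵖ] M') (y : TensorProduct ℤ M B) :
    mapM R h (Submodule.Quotient.mk y) =
      Submodule.Quotient.mk (LinearMap.rTensor B h.toAddMonoidHom.toIntLinearMap y) :=
  rfl

section SAction

variable [Module Sᵐᵒᵖ B] [SMulCommClass R Sᵐᵒᵖ B]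

/-- The right action of `s : S` on an `(R,S)`-bimodule, as a left `R`-linear map. -/
def sEndo (s : Sᵐᵒᵖ) : B →ₗ[R] B where
  toFun b := s • b
  map_add' x y := smul_add s x y
  map_smul' r b := (smul_comm r s b).symm

variable (M B)

/-- The right `S`-action on `M ⊗_R B` as a ring homomorphism `Sᵐᵒᵖ → End_ℤ (M ⊗_R B)`. -/
noncomputable def rho : Sᵐᵒᵖ →+* Module.End ℤ (RTensor R M B) where
  toFun s := mapB R (sEndo R S (B := B) s)
  map_one' := by
    refine Submodule.linearMap_qext _ (TensorProduct.ext' fun m b => ?_)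
    change (Submodule.Quotient.mk (m ⊗ₜ[ℤ] ((1 : Sᵐᵒᵖ) • b)) : RTensor R M B) =
      Submodule.Quotient.mk (m ⊗ₜ[ℤ] b)
    rw [one_smul]
  map_mul' s s' := by
    refine Submodule.linearMap_qext _ (TensorProduct.ext' fun m b => ?_)
    change (Submodule.Quotient.mk (m ⊗ₜ[ℤ] ((s * s') • b)) : RTensor R M B) =
      Submodule.Quotient.mk (m ⊗ₜ[ℤ] (s • s' • b))
    rw [mul_smul]
  map_zero' := by
    refine Submodule.linearMap_qext _ (TensorProduct.ext' fun m b => ?_)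
    change (Submodule.Quotient.mk (m ⊗ₜ[ℤ] ((0 : Sᵐᵒᵖ) • b)) : RTensor R M B) = 0
    rw [zero_smul, TensorProduct.tmul_zero, Submodule.Quotient.mk_zero]
  map_add' s s' := by
    refine Submodule.linearMap_qext _ (TensorProduct.ext' fun m b => ?_)
    change (Submodule.Quotient.mk (m ⊗ₜ[ℤ] ((s + s') • b)) : RTensor R M B) =
      Submodule.Quotient.mk (m ⊗ₜ[ℤ] (s • b)) + Submodule.Quotient.mk (m ⊗ₜ[ℤ] (s' • b))
    rw [add_smul, TensorProduct.tmul_add, Submodule.Quotient.mk_add]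

/-- The right `S`-module structure on `M ⊗_R B` for an `(R,S)`-bimodule `B`. -/
noncomputable instance instModS : Module Sᵐᵒᵖ (RTensor R M B) :=
  Module.compHom _ (rho R S M B)

theorem smul_mk (s : Sᵐᵒᵖ) (y : TensorProduct ℤ M B) :
    s • (Submodule.Quotient.mk y : RTensor R M B) =
      Submodule.Quotient.mk
        (LinearMap.lTensor M ((sEndo R S (B := B) s).toAddMonoidHom.toIntLinearMap) y) :=
  rfl

@[simp] theorem smul_rtmul (s : Sᵐᵒᵖ) (m : M) (b : B) :
    s • rtmul R M B m b = rtmul R M B m (s • b) :=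
  rfl

end SAction

end Tensor

end MTM
namespace MTM

open MulOpposite TensorProduct

variable (R : Type u) [Ring R] (S : Type u) [Ring S]

section TensorMaps

variable (M : Type u) [AddCommGroup M] [Module Rᵐᵒᵖ M]
variable {M' : Type u} [AddCommGroup M'] [Module Rᵐᵒᵖ M']
variable (B : Type u) [AddCommGroup B] [Module R B] [Module Sᵐᵒᵖ B] [SMulCommClass R Sᵐᵒᵖ B]
variable {B' : Type u} [AddCommGroup B'] [Module R B'] [Module Sᵐᵒᵖ B'] [SMulCommClass R Sᵐᵒᵖ B']

/-- Functoriality of `M ⊗_R -` in maps of `(R,S)`-bimodules, as a map of right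
`S`-modules. -/
noncomputable def mapBS (g : B →ₗ[R] B') (hg : ∀ (s : Sᵐᵒᵖ) (b : B), g (s • b) = s • g b) :
    RTensor R M B →ₗ[Sᵐᵒᵖ] RTensor R M B' where
  toFun := mapB R g
  map_add' := map_add _
  map_smul' s x := by
    obtain ⟨y, rfl⟩ := Submodule.Quotient.mk_surjective _ x
    show mapB R g (s • Submodule.Quotient.mk y) = s • mapB R g (Submodule.Quotient.mk y)
    rw [smul_mk R S, mapB_mk, mapB_mk, smul_mk R S,
      ← LinearMap.comp_apply, ← LinearMap.comp_apply, ← LinearMap.lTensor_comp,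
      ← LinearMap.lTensor_comp]
    have hcomp : g.toAddMonoidHom.toIntLinearMap ∘ₗ
          (sEndo R S (B := B) s).toAddMonoidHom.toIntLinearMap =
        (sEndo R S (B := B') s).toAddMonoidHom.toIntLinearMap ∘ₗ
          g.toAddMonoidHom.toIntLinearMap := by
      ext b
      exact hg s b
    rw [hcomp]

/-- Functoriality of `- ⊗_R B` in maps of right `R`-modules, as a map of right
`S`-modules. -/
noncomputable def mapMS (h : M →ₗ[Rᵐᵒᵖ] M') :
    RTensor R M B →ₗ[Sᵐᵒᵖ] RTensor R M' B where
  toFun := mapM R h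
  map_add' := map_add _
  map_smul' s x := by
    obtain ⟨y, rfl⟩ := Submodule.Quotient.mk_surjective _ x
    show mapM R h (s • Submodule.Quotient.mk y) = s • mapM R h (Submodule.Quotient.mk y)
    rw [smul_mk R S, mapM_mk, mapM_mk, smul_mk R S,
      ← LinearMap.comp_apply, ← LinearMap.comp_apply, LinearMap.rTensor_comp_lTensor,
      LinearMap.lTensor_comp_rTensor]

end TensorMaps

section Canonical

variable (M : Type u) [AddCommGroup M] [Module Rᵐᵒᵖ M]

/-- The canonical map `M ⊗_R (∏ᵢ Lᵢ) → ∏ᵢ (M ⊗_R Lᵢ)` for a family of left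
`R`-modules, as a `ℤ`-linear map. -/
noncomputable def canonicalL {ι' : Type u} (L : ι' → Type u)
    [∀ i, AddCommGroup (L i)] [∀ i, Module R (L i)] :
    RTensor R M (∀ i, L i) →ₗ[ℤ] ∀ i, RTensor R M (L i) :=
  LinearMap.pi fun i => mapB R (LinearMap.proj i)

/-- The canonical map `M ⊗_R (∏ᵢ Lᵢ) → ∏ᵢ (M ⊗_R Lᵢ)` for a family of
`(R,S)`-bimodules, as a map of right `S`-modules. -/
noncomputable def canonicalB {ι' : Type u} (L : ι' → Type u)
    [∀ i, AddCommGroup (L i)] [∀ i, Module R (L i)] [∀ i, Module Sᵐᵒᵖ (L i)]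
    [∀ i, SMulCommClass R Sᵐᵒᵖ (L i)] :
    RTensor R M (∀ i, L i) →ₗ[Sᵐᵒᵖ] ∀ i, RTensor R M (L i) :=
  LinearMap.pi fun i => mapBS R S M (∀ j, L j) (LinearMap.proj i) (fun _ _ => rfl)

/-- The canonical map `(∏_λ M_λ) ⊗_R B → ∏_λ (M_λ ⊗_R B)` for a family of right
`R`-modules and an `(R,S)`-bimodule `B`, as a map of right `S`-modules. -/
noncomputable def canonicalM {ι' : Type u} (N : ι' → Type u)
    [∀ i, AddCommGroup (N i)] [∀ i, Module Rᵐᵒᵖ (N i)]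
    (B : Type u) [AddCommGroup B] [Module R B] [Module Sᵐᵒᵖ B] [SMulCommClass R Sᵐᵒᵖ B] :
    RTensor R (∀ i, N i) B →ₗ[Sᵐᵒᵖ] ∀ i, RTensor R (N i) B :=
  LinearMap.pi fun i => mapMS R S (∀ j, N j) B (LinearMap.proj i)

end Canonical

section UnitMap

variable (M : Type u) [AddCommGroup M] [Module Rᵐᵒᵖ M]
variable (B : Type u) [AddCommGroup B] [Module R B] [Module Rᵐᵒᵖ B] [SMulCommClass R Rᵐᵒᵖ B]

/-- For an `(R,R)`-bimodule `B` and a central-ish element `e` (e.g. `1 ∈ S` for a ring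
extension `R → S`), the canonical map `M → M ⊗_R B`, `a ↦ a ⊗ e`, as a map of right
`R`-modules. -/
noncomputable def unitMap (e : B) (he : ∀ r : R, r • e = op r • e) :
    M →ₗ[Rᵐᵒᵖ] RTensor R M B where
  toFun m := rtmul R M B m e
  map_add' m m' := by
    show Submodule.Quotient.mk _ = Submodule.Quotient.mk _ + Submodule.Quotient.mk _
    rw [← Submodule.Quotient.mk_add, TensorProduct.add_tmul]
  map_smul' r m := by
    show rtmul R M B (r • m) e = r • rtmul R M B m e
    rw [smul_rtmul]
    rw [rtmul, rtmul, Submodule.Quotient.eq]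
    have : (r • e : B) = (r.unop : R) • e := (he r.unop).symm
    rw [this]
    exact Submodule.subset_span ⟨r.unop, m, e, by rw [op_unop]⟩

end UnitMap

end MTM
namespace MTM

open MulOpposite

variable (R : Type u) [Ring R] (S : Type u) [Ring S]

/-! ### pp formulas for `(R,S)`-bimodules -/

/-- The action of a formal coefficient `∑ (r,s)` of the bimodule language on an
element of an `(R,S)`-bimodule: `b ↦ ∑ r b s`. -/
def cAct (c : List (R × S)) {B : Type v} [AddCommGroup B] [Module R B] [Module Sᵐᵒᵖ B]
    (b : B) : B :=
  (c.map fun p => p.1 • (op p.2 • b)).sum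

/-- A pp formula for `(R,S)`-bimodules (equivalently, for right `Rᵒᵖ ⊗ S`-modules):
coefficients are formal sums of pairs `(r,s)`, acting by `x ↦ ∑ r x s`. -/
structure BiPP (ι : Type) : Type (max u 1) where
  κ : Type
  ε : Type
  [fintκ : Fintype κ]
  [fintε : Fintype ε]
  A : Matrix ι ε (List (R × S))
  B : Matrix κ ε (List (R × S))

attribute [instance] BiPP.fintκ BiPP.fintε

variable {R S} in
/-- Solution set of a bimodule pp formula in an `(R,S)`-bimodule. -/
def BiPP.sol {ι : Type} [Fintype ι] (θ : BiPP R S ι) (Bm : Type v) [AddCommGroup Bm]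
    [Module R Bm] [Module Sᵐᵒᵖ Bm] : Set (ι → Bm) :=
  { a | ∃ b : θ.κ → Bm, ∀ j : θ.ε,
      (∑ i, cAct R S (θ.A i j) (a i)) + (∑ k, cAct R S (θ.B k j) (b k)) = 0 }

/-- A bundled `(R,S)`-bimodule. -/
structure Bimod : Type (u + 1) where
  carrier : Type u
  [addCommGroup : AddCommGroup carrier]
  [modR : Module R carrier]
  [modSop : Module Sᵐᵒᵖ carrier]
  [smulComm : SMulCommClass R Sᵐᵒᵖ carrier]

attribute [instance] Bimod.addCommGroup Bimod.modR Bimod.modSop Bimod.smulComm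

instance : CoeSort (Bimod R S) (Type u) := ⟨Bimod.carrier⟩

/-- Bundling an `(R,S)`-bimodule. -/
def Bimod.of (B : Type u) [AddCommGroup B] [Module R B] [Module Sᵐᵒᵖ B]
    [SMulCommClass R Sᵐᵒᵖ B] : Bimod R S :=
  ⟨B⟩

/-- A pp-pair for `(R,S)`-bimodules. -/
structure BiPPPair : Type (max u 1) where
  n : ℕ
  num : BiPP R S (Fin n)
  den : BiPP R S (Fin n)
  le : ∀ Bm : Bimod R S, den.sol Bm ⊆ num.sol Bm

variable {R S} in
/-- Closedness of a bimodule pp-pair on a bimodule. -/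
def BiPPPair.ClosedOn (p : BiPPPair R S) (Bm : Type v) [AddCommGroup Bm] [Module R Bm]
    [Module Sᵐᵒᵖ Bm] : Prop :=
  p.num.sol Bm = p.den.sol Bm

/-- The class of bimodules defined by closure of a set of bimodule pp-pairs. -/
def biDefinedBy (Φ : Set (BiPPPair R S)) : Set (Bimod R S) :=
  { Bm | ∀ p ∈ Φ, p.ClosedOn Bm }

/-- Definable subcategories of the category `R-Mod-S` of `(R,S)`-bimodules. -/
def IsDefinableBi (𝓑 : Set (Bimod R S)) : Prop :=
  ∃ Φ : Set (BiPPPair R S), 𝓑 = biDefinedBy R S Φ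

/-- The smallest definable subcategory of `R-Mod-S` containing `X`. -/
def genBi (X : Set (Bimod R S)) : Set (Bimod R S) :=
  ⋂₀ { 𝓑 | IsDefinableBi R S 𝓑 ∧ X ⊆ 𝓑 }

/-- `θ ≤_𝓑 θ'` for a class `𝓑` of bimodules. -/
def BiLeOn (𝓑 : Set (Bimod R S)) {ι : Type} [Fintype ι] (θ θ' : BiPP R S ι) : Prop :=
  ∀ Bm ∈ 𝓑, θ.sol Bm ⊆ θ'.sol Bm

/-! ### Partitioned tuples, `(σ:φ)` and atomicity with respect to a bimodule -/

/-- The index type of a `ν`-partitioned tuple: `k` blocks, the `t`-th of size `ν t`. -/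
abbrev PIdx {k : ℕ} (ν : Fin k → ℕ) : Type := (t : Fin k) × Fin (ν t)

/-- The tensor product of matching partitioned tuples: the `k`-tuple
`(ā₁ ⊗ b̄₁, …, ā_k ⊗ b̄_k)` where `ā_t ⊗ b̄_t = ∑_j a_{tj} ⊗ b_{tj}`. -/
noncomputable def ptensor (M : Type u) [AddCommGroup M] [Module Rᵐᵒᵖ M] (B : Type u)
    [AddCommGroup B] [Module R B] {k : ℕ} {ν : Fin k → ℕ}
    (a : PIdx ν → M) (b : PIdx ν → B) : Fin k → RTensor R M B :=
  fun t => ∑ j : Fin (ν t), rtmul R M B (a ⟨t, j⟩) (b ⟨t, j⟩)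

variable {R}

/-- The pp-type of `ā` in `M` is generated by `φ`: `pp^M(ā) = {ψ : φ ≤ ψ}`. -/
def GeneratedBy {ι : Type} [Fintype ι] {M : Type u} [AddCommGroup M] [Module Rᵐᵒᵖ M]
    (a : ι → M) (φ : PP R ι) : Prop :=
  ∀ ψ : PP R ι, a ∈ ψ.sol M ↔ φ.Le ψ

/-- The pp-type of `ā` in `M` is `𝒳`-generated by `φ`: `pp^M(ā) = {ψ : φ ≤_𝒳 ψ}`. -/
def GeneratedByOn (𝒳 : Set (ModuleCat.{u} Rᵐᵒᵖ)) {ι : Type} [Fintype ι] {M : Type u}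
    [AddCommGroup M] [Module Rᵐᵒᵖ M] (a : ι → M) (φ : PP R ι) : Prop :=
  ∀ ψ : PP R ι, a ∈ ψ.sol M ↔ LeOn R 𝒳 φ ψ

variable (R)

/-- An assignment `(σ, φ) ↦ (σ:φ)` of a bimodule pp formula to each pp formula `σ`
for right `S`-modules (in `k` free variables) and each matching partitioned pp
formula `φ` for right `R`-modules. -/
def ColonAsgn : Type (max u 1) :=
  ∀ (k : ℕ) (ν : Fin k → ℕ), PP S (Fin k) → PP R (PIdx ν) → BiPP R S (PIdx ν)

/-- The characterizing property of the assignment `(σ, φ) ↦ (σ:φ)`: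
(1) if `ā ∈ φ(M)` and `b̄ ∈ (σ:φ)(B)` then `ā ⊗ b̄ ∈ σ(M ⊗_R B)`;
(2) if `pp^M(ā)` is generated by `φ` then `ā ⊗ b̄ ∈ σ(M ⊗_R B)` iff `b̄ ∈ (σ:φ)(B)`. -/
def ColonSpec (c : ColonAsgn R S) : Prop :=
  ∀ (k : ℕ) (ν : Fin k → ℕ) (σ : PP S (Fin k)) (φ : PP R (PIdx ν))
    (M : Type u) [AddCommGroup M] [Module Rᵐᵒᵖ M]
    (Bm : Type u) [AddCommGroup Bm] [Module R Bm] [Module Sᵐᵒᵖ Bm]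
    [SMulCommClass R Sᵐᵒᵖ Bm] (a : PIdx ν → M) (b : PIdx ν → Bm),
    (a ∈ φ.sol M → b ∈ (c k ν σ φ).sol Bm →
      ptensor R M Bm a b ∈ σ.sol (RTensor R M Bm)) ∧
    (GeneratedBy a φ →
      (ptensor R M Bm a b ∈ σ.sol (RTensor R M Bm) ↔ b ∈ (c k ν σ φ).sol Bm))

/-- `M` is atomic with respect to the `(R,S)`-bimodule `B` (relative to a choice `c`
of the assignment `(σ,φ) ↦ (σ:φ)`): for every partitioned finite tuple `ā` from `M`
and every pp formula `σ` for right `S`-modules there is `φ ∈ pp^M(ā)` such that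
`(σ:φ)(B)` is the largest among the `(σ:ψ)(B)` with `ψ ∈ pp^M(ā)`. -/
def AtomicWrt (c : ColonAsgn R S) (M : Type u) [AddCommGroup M] [Module Rᵐᵒᵖ M]
    (Bm : Type u) [AddCommGroup Bm] [Module R Bm] [Module Sᵐᵒᵖ Bm] : Prop :=
  ∀ (k : ℕ) (ν : Fin k → ℕ) (σ : PP S (Fin k)) (a : PIdx ν → M),
    ∃ φ : PP R (PIdx ν), a ∈ φ.sol M ∧
      ∀ ψ : PP R (PIdx ν), a ∈ ψ.sol M → (c k ν σ ψ).sol Bm ⊆ (c k ν σ φ).sol Bm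

/-! ### Mittag-Leffler modules, atomic modules -/

/-- `M` is Mittag-Leffler: the canonical map `M ⊗_R ∏ᵢ Lᵢ → ∏ᵢ (M ⊗_R Lᵢ)` is
injective for every family of left `R`-modules. -/
def IsML (M : Type u) [AddCommGroup M] [Module Rᵐᵒᵖ M] : Prop :=
  ∀ (ι' : Type u) (L : ι' → Type u) (_ : ∀ i, AddCommGroup (L i))
    (_ : ∀ i, Module R (L i)), Function.Injective (canonicalL R M L)

/-- `M` is `𝒳`-Mittag-Leffler for a class `𝒳` of left `R`-modules. -/
def IsMLOn (𝒳 : Set (ModuleCat.{u} R)) (M : Type u) [AddCommGroup M] [Module Rᵐᵒᵖ M] :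
    Prop :=
  ∀ (ι' : Type u) (L : ι' → Type u) (_ : ∀ i, AddCommGroup (L i))
    (_ : ∀ i, Module R (L i)),
    (∀ i, ModuleCat.of R (L i) ∈ 𝒳) → Function.Injective (canonicalL R M L)

/-- `M` is `D`-atomic: the pp-type of every finite tuple from `M` is `D`-finitely
generated. -/
def AtomicOn (D : Set (ModuleCat.{u} Rᵐᵒᵖ)) (M : Type u) [AddCommGroup M]
    [Module Rᵐᵒᵖ M] : Prop :=
  ∀ (n : ℕ) (a : Fin n → M), ∃ φ : PP R (Fin n), GeneratedByOn D a φ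

/-- The elementary dual `⟨K⟩ᵈ ⊆ Mod-R` of the definable subcategory of `R-Mod`
generated by a class `K` of left `R`-modules: it is defined by the pp-pairs for right
`R`-modules whose (elementary) dual pp-pair is closed on `⟨K⟩`. -/
def dualCat (K : Set (ModuleCat.{u} R)) : Set (ModuleCat.{u} Rᵐᵒᵖ) :=
  definedBy R { p : PPPair R |
    ∀ L ∈ genL R K, (p.num.dual).solL L = (p.den.dual).solL L }

/-! ### Pure projectivity, finite genericity, pure cogenerators -/

/-- A left `R`-module is pure-projective if it is a direct summand of a direct sum of
finitely presented left `R`-modules. -/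
def IsPureProjL (B : Type u) [AddCommGroup B] [Module R B] : Prop :=
  ∃ (ι : Type u) (_ : DecidableEq ι) (F : ι → Type u) (_ : ∀ i, AddCommGroup (F i))
    (_ : ∀ i, Module R (F i)) (_ : ∀ i, Module.FinitePresentation R (F i))
    (e : B →ₗ[R] DirectSum ι F) (p : DirectSum ι F →ₗ[R] B), p.comp e = LinearMap.id

/-- `M` is finitely generic in the definable subcategory `D`: for every pp formula
`φ` there is a tuple from `M` whose pp-type is `D`-generated by `φ`. -/
def FinGeneric (D : Set (ModuleCat.{u} Rᵐᵒᵖ)) (M : Type u) [AddCommGroup M]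
    [Module Rᵐᵒᵖ M] : Prop :=
  ModuleCat.of Rᵐᵒᵖ M ∈ D ∧
    ∀ (ι : Type) (_ : Fintype ι) (φ : PP R ι), ∃ a : ι → M, GeneratedByOn D a φ

variable {R S}

/-- The pp-type of a tuple in a bimodule is `𝓑`-generated by `θ`. -/
def BiGeneratedByOn (𝓑 : Set (Bimod R S)) {ι : Type} [Fintype ι] {Bm : Type u}
    [AddCommGroup Bm] [Module R Bm] [Module Sᵐᵒᵖ Bm] (b : ι → Bm) (θ : BiPP R S ι) :
    Prop :=
  ∀ θ' : BiPP R S ι, b ∈ θ'.sol Bm ↔ BiLeOn R S 𝓑 θ θ'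

variable (R S)

/-- A bimodule is finitely generic in a definable subcategory `𝓑` of `R-Mod-S`. -/
def FinGenericBi (𝓑 : Set (Bimod R S)) (Bm : Type u) [AddCommGroup Bm] [Module R Bm]
    [Module Sᵐᵒᵖ Bm] [SMulCommClass R Sᵐᵒᵖ Bm] : Prop :=
  Bimod.of R S Bm ∈ 𝓑 ∧
    ∀ (ι : Type) (_ : Fintype ι) (θ : BiPP R S ι), ∃ b : ι → Bm, BiGeneratedByOn 𝓑 b θ

end MTM
namespace MTM

open MulOpposite

variable (R : Type u) [Ring R] (S : Type u) [Ring S]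

/-! ### Tensor extension of definable subcategories -/

section TensorExt

variable (B : Type u) [AddCommGroup B] [Module R B] [Module Sᵐᵒᵖ B] [SMulCommClass R Sᵐᵒᵖ B]

/-- The set `{M ⊗_R B : M ∈ D}` of right `S`-modules. -/
noncomputable def tensorExtSet (D : Set (ModuleCat.{u} Rᵐᵒᵖ)) : Set (ModuleCat.{u} Sᵐᵒᵖ) :=
  { N | ∃ M ∈ D, N = ModuleCat.of Sᵐᵒᵖ (RTensor R M B) }

/-- The tensor extension `D ⊗_R B`: the definable subcategory of `Mod-S` generated by
`{M ⊗_R B : M ∈ D}`. -/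
noncomputable def tensorExt (D : Set (ModuleCat.{u} Rᵐᵒᵖ)) : Set (ModuleCat.{u} Sᵐᵒᵖ) :=
  gen S (tensorExtSet R S B D)

end TensorExt

/-- `D ⊗ 𝓑` for a definable subcategory `D` of `Mod-R` and a definable subcategory
`𝓑` of `R-Mod-S`: the definable subcategory of `Mod-S` generated by the modules
`M ⊗_R B` with `M ∈ D`, `B ∈ 𝓑`. -/
noncomputable def tensorProd (D : Set (ModuleCat.{u} Rᵐᵒᵖ)) (𝓑 : Set (Bimod R S)) :
    Set (ModuleCat.{u} Sᵐᵒᵖ) :=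
  gen S { N | ∃ M ∈ D, ∃ Bm ∈ 𝓑, N = ModuleCat.of Sᵐᵒᵖ (RTensor R M Bm) }

/-! ### Directed colimits -/

open CategoryTheory CategoryTheory.Limits in
/-- `M` is a directed colimit of modules satisfying `P`. -/
def IsDirectedColimitOf (M : ModuleCat.{u} Rᵐᵒᵖ) (P : ModuleCat.{u} Rᵐᵒᵖ → Prop) :
    Prop :=
  ∃ (J : Type u) (_ : Preorder J) (_ : IsDirected J (· ≤ ·)) (_ : Nonempty J)
    (F : J ⥤ ModuleCat.{u} Rᵐᵒᵖ) (c : Cocone F),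
    Nonempty (IsColimit c) ∧ Nonempty (c.pt ≅ M) ∧ ∀ j, P (F.obj j)

/-! ### Elementary embeddings of rings -/

open FirstOrder in
/-- `f : R →+* S` is an elementary embedding of rings: there is a model-theoretic
elementary embedding (for the first-order language of rings) whose underlying
function is `f`.  (Elementary embeddings preserve and reflect all first-order
formulas at all tuples of parameters from `R`.) -/
def IsElemRingEmb (f : R →+* S) : Prop :=
  letI := FirstOrder.Ring.compatibleRingOfRing R
  letI := FirstOrder.Ring.compatibleRingOfRing S
  ∃ F : Language.ring.ElementaryEmbedding R S, ∀ r : R, F r = f r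

/-! ### Bimodule structures along a ring homomorphism -/

section AlongHom

variable (f : R →+* S)

/-- The left `R`-module structure on `S` along `f`. -/
def modLeft : Module R S := Module.compHom S f

/-- The right `R`-module structure on `S` along `f`. -/
def modRight : Module Rᵐᵒᵖ S := Module.compHom S (RingHom.op f)

/-- `S` is an `(R,S)`-bimodule along `f`. -/
theorem smulComm_RS :
    letI := modLeft R S f
    SMulCommClass R Sᵐᵒᵖ S := by
  letI := modLeft R S f
  constructor
  intro r s x
  show f r * (x * s.unop) = (f r * x) * s.unop
  rw [mul_assoc]

/-- `S` is an `(R,R)`-bimodule along `f`. -/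
theorem smulComm_RR :
    letI := modLeft R S f
    letI := modRight R S f
    SMulCommClass R Rᵐᵒᵖ S := by
  letI := modLeft R S f
  letI := modRight R S f
  constructor
  intro r r' x
  show f r * (x * f r'.unop) = (f r * x) * f r'.unop
  rw [mul_assoc]

end AlongHom

end MTM
namespace MTM

open MulOpposite

variable (R : Type u) [Ring R] (S : Type u) [Ring S]

/-- A pure embedding of `(R,S)`-bimodules: an injective map of bimodules which
reflects solution sets of bimodule pp formulas. -/
def IsBiPureEmb {B B' : Type u} [AddCommGroup B] [Module R B] [Module Sᵐᵒᵖ B]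
    [AddCommGroup B'] [Module R B'] [Module Sᵐᵒᵖ B']
    (g : B →ₗ[R] B') (_ : ∀ (s : Sᵐᵒᵖ) (b : B), g (s • b) = s • g b) : Prop :=
  Function.Injective g ∧
    ∀ (ι : Type) (_ : Fintype ι) (θ : BiPP R S ι) (a : ι → B),
      (fun i => g (a i)) ∈ θ.sol B' → a ∈ θ.sol B

/-- The ring `S`, viewed as an `(R,S)`-bimodule (and as an `(R,R)`-bimodule) along a
ring homomorphism `f : R →+* S`. -/
def SAlong (f : R →+* S) : Type u := S

namespace SAlong

variable (f : R →+* S)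

instance : AddCommGroup (SAlong R S f) := inferInstanceAs (AddCommGroup S)
instance : Module R (SAlong R S f) := Module.compHom S f
instance : Module Sᵐᵒᵖ (SAlong R S f) := inferInstanceAs (Module Sᵐᵒᵖ S)
instance : Module Rᵐᵒᵖ (SAlong R S f) := Module.compHom S (RingHom.op f)

instance : SMulCommClass R Sᵐᵒᵖ (SAlong R S f) := smulComm_RS R S f

instance : SMulCommClass R Rᵐᵒᵖ (SAlong R S f) := smulComm_RR R S f

/-- The element `1 ∈ S`. -/
def one : SAlong R S f := (1 : S)

theorem smul_one : ∀ r : R, r • (one R S f) = op r • (one R S f) := by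
  intro r
  show f r * (1 : S) = (1 : S) * f r
  rw [mul_one, one_mul]

end SAlong

end MTM
namespace MTM

section Statement9Helpers

open MulOpposite

variable (R : Type u) [Ring R]
variable {M : Type u} [AddCommGroup M] [Module Rᵐᵒᵖ M]
variable {B B' B'' : Type u} [AddCommGroup B] [Module R B]
  [AddCommGroup B'] [Module R B'] [AddCommGroup B''] [Module R B'']

theorem mapB_comp_apply (g : B' →ₗ[R] B'') (g' : B →ₗ[R] B') (x : RTensor R M B) :
    mapB R (g ∘ₗ g') x = mapB R g (mapB R g' x) := by
  obtain ⟨y, rfl⟩ := Submodule.Quotient.mk_surjective _ x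
  rw [mapB_mk, mapB_mk, mapB_mk]
  congr 1
  have h : (g ∘ₗ g').toAddMonoidHom.toIntLinearMap
      = g.toAddMonoidHom.toIntLinearMap ∘ₗ g'.toAddMonoidHom.toIntLinearMap :=
    LinearMap.ext fun _ => rfl
  rw [h, LinearMap.lTensor_comp, LinearMap.comp_apply]

theorem mapB_zero_apply (x : RTensor R M B) : mapB R (0 : B →ₗ[R] B') x = 0 := by
  obtain ⟨y, rfl⟩ := Submodule.Quotient.mk_surjective _ x
  rw [mapB_mk]
  have h : (0 : B →ₗ[R] B').toAddMonoidHom.toIntLinearMap = 0 :=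
    LinearMap.ext fun _ => rfl
  rw [h, LinearMap.lTensor_zero, LinearMap.zero_apply, Submodule.Quotient.mk_eq_zero]
  exact (tensorRel R M B').zero_mem

theorem mapB_id_apply (x : RTensor R M B) : mapB R (LinearMap.id : B →ₗ[R] B) x = x := by
  obtain ⟨y, rfl⟩ := Submodule.Quotient.mk_surjective _ x
  rw [mapB_mk]
  have h : (LinearMap.id : B →ₗ[R] B).toAddMonoidHom.toIntLinearMap = LinearMap.id :=
    LinearMap.ext fun _ => rfl
  rw [h, LinearMap.lTensor_id, LinearMap.id_apply]

theorem mapB_add_apply (g g' : B →ₗ[R] B') (x : RTensor R M B) :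
    mapB R (g + g') x = mapB R g x + mapB R g' x := by
  obtain ⟨y, rfl⟩ := Submodule.Quotient.mk_surjective _ x
  rw [mapB_mk, mapB_mk, mapB_mk, ← Submodule.Quotient.mk_add]
  congr 1
  have h : (g + g').toAddMonoidHom.toIntLinearMap
      = g.toAddMonoidHom.toIntLinearMap + g'.toAddMonoidHom.toIntLinearMap :=
    LinearMap.ext fun _ => rfl
  rw [h, LinearMap.lTensor_add, LinearMap.add_apply]

theorem mapB_finsetSum_apply {τ : Type} (s : Finset τ) (f : τ → (B →ₗ[R] B'))
    (x : RTensor R M B) :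
    mapB R (∑ i ∈ s, f i) x = ∑ i ∈ s, mapB R (f i) x := by
  classical
  induction s using Finset.cons_induction with
  | empty => simpa using mapB_zero_apply R (B' := B') x
  | cons a s ha ih => rw [Finset.sum_cons, Finset.sum_cons, mapB_add_apply, ih]

theorem opSmul_mapB {S : Type u} [Ring S] [Module Sᵐᵒᵖ B] [SMulCommClass R Sᵐᵒᵖ B]
    (s : Sᵐᵒᵖ) (x : RTensor R M B) : s • x = mapB R (sEndo R S s) x := rfl

/-- Pack/unpack identity: any element of `M ⊗ (τ → B)` is the sum of the images of its
"components". -/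
theorem mapB_pack_unpack {τ : Type} [Fintype τ] [DecidableEq τ]
    (x : RTensor R M (τ → B)) :
    x = ∑ j, mapB R (LinearMap.single R (fun _ : τ => B) j)
        (mapB R (LinearMap.proj j) x) := by
  have : ∀ j : τ, mapB R (LinearMap.single R (fun _ : τ => B) j)
      (mapB R (LinearMap.proj j) x)
      = mapB R ((LinearMap.single R (fun _ : τ => B) j) ∘ₗ (LinearMap.proj j)) x :=
    fun j => (mapB_comp_apply R _ _ x).symm
  rw [Finset.sum_congr rfl fun j _ => this j, ← mapB_finsetSum_apply]
  have hid : (∑ j, (LinearMap.single R (fun _ : τ => B) j) ∘ₗ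
      (LinearMap.proj j : (τ → B) →ₗ[R] B)) = LinearMap.id :=
    LinearMap.ext fun w => by
      simp only [LinearMap.sum_apply, LinearMap.comp_apply, LinearMap.proj_apply,
        LinearMap.coe_single, LinearMap.id_apply]
      exact Finset.univ_sum_single w
  rw [hid, mapB_id_apply]

/-- Right exactness of `M ⊗_R -` for the bespoke tensor product. -/
theorem rtensor_exact {U V Q : Type u} [AddCommGroup U] [Module R U]
    [AddCommGroup V] [Module R V] [AddCommGroup Q] [Module R Q]
    (g : U →ₗ[R] V) (q : V →ₗ[R] Q) (hexact : Function.Exact g q)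
    (hsurj : Function.Surjective q) (x : RTensor R M V) (hx : mapB R q x = 0) :
    ∃ d : RTensor R M U, mapB R g d = x := by
  obtain ⟨y, rfl⟩ := Submodule.Quotient.mk_surjective _ x
  rw [mapB_mk, Submodule.Quotient.mk_eq_zero] at hx
  have hle : tensorRel R M Q ≤ Submodule.map
      (LinearMap.lTensor M q.toAddMonoidHom.toIntLinearMap) (tensorRel R M V) := by
    refine Submodule.span_le.mpr ?_
    rintro z ⟨r, m, b, rfl⟩
    obtain ⟨v, rfl⟩ := hsurj b
    refine ⟨(op r • m) ⊗ₜ[ℤ] v - m ⊗ₜ[ℤ] (r • v), Submodule.subset_span ⟨r, m, v, rfl⟩, ?_⟩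
    simp only [map_sub, LinearMap.lTensor_tmul, AddMonoidHom.coe_toIntLinearMap,
      LinearMap.toAddMonoidHom_coe]
    rw [q.map_smul]
  obtain ⟨y', hy', hyy⟩ := hle hx
  have hexZ : Function.Exact g.toAddMonoidHom.toIntLinearMap
      q.toAddMonoidHom.toIntLinearMap := hexact
  have hsZ : Function.Surjective q.toAddMonoidHom.toIntLinearMap := hsurj
  have h0 : LinearMap.lTensor M q.toAddMonoidHom.toIntLinearMap (y - y') = 0 := by
    rw [map_sub, hyy, sub_self]
  obtain ⟨z, hz⟩ := (lTensor_exact M hexZ hsZ (y - y')).mp h0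
  refine ⟨Submodule.Quotient.mk z, ?_⟩
  rw [mapB_mk, hz]
  refine (Submodule.Quotient.eq _).mpr ?_
  have h' : y - y' - y = -y' := sub_sub_cancel_left y y'
  rw [h']
  exact (tensorRel R M V).neg_mem hy'

section CoefMaps

variable (S : Type u) [Ring S]
variable {W : Type u} [AddCommGroup W] [Module R W] [Module Sᵐᵒᵖ W]
  [SMulCommClass R Sᵐᵒᵖ W]

/-- The right `R`-linear map `(τ → W) → (ε' → W)` induced by a matrix of
coefficients from `S` acting on the right of the bimodule `W`. -/
def coefMap {τ ε' : Type} [Fintype τ] (C : Matrix τ ε' S) :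
    (τ → W) →ₗ[R] (ε' → W) :=
  LinearMap.pi fun j => ∑ t, (sEndo R S (op (C t j))).comp (LinearMap.proj t)

theorem coefMap_apply {τ ε' : Type} [Fintype τ] (C : Matrix τ ε' S) (z : τ → W)
    (j : ε') : coefMap R S C z j = ∑ t, op (C t j) • z t := by
  simp only [coefMap, LinearMap.pi_apply, LinearMap.sum_apply, LinearMap.comp_apply,
    LinearMap.proj_apply]
  rfl

theorem mapB_proj_coefMap {τ ε' : Type} [Fintype τ] [Fintype ε'] (C : Matrix τ ε' S)
    (x : RTensor R M (τ → W)) (j : ε') :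
    mapB R (LinearMap.proj j) (mapB R (coefMap R S C (W := W)) x)
      = ∑ t, op (C t j) • mapB R (LinearMap.proj t : (τ → W) →ₗ[R] W) x := by
  rw [← mapB_comp_apply,
    show (LinearMap.proj j : (ε' → W) →ₗ[R] W).comp (coefMap R S C (W := W))
      = ∑ t, (sEndo R S (op (C t j))).comp (LinearMap.proj t)
      from LinearMap.proj_pi _ _,
    mapB_finsetSum_apply]
  exact Finset.sum_congr rfl fun t _ => by rw [mapB_comp_apply, ← opSmul_mapB R]

end CoefMaps

end Statement9Helpers

/-- If `M` is a Mittag-Leffler right `R`-module and `(L_λ)` is a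
family of `(R,S)`-bimodules, then the canonical map
`M ⊗_R ∏_λ L_λ → ∏_λ (M ⊗_R L_λ)` is a pure embedding of right `S`-modules. -/
theorem statement9 (R S : Type u) [Ring R] [Ring S]
    (M : Type u) [AddCommGroup M] [Module Rᵐᵒᵖ M] (hM : IsML R M)
    (ι' : Type u) (L : ι' → Type u) [∀ i, AddCommGroup (L i)] [∀ i, Module R (L i)]
    [∀ i, Module Sᵐᵒᵖ (L i)] [∀ i, SMulCommClass R Sᵐᵒᵖ (L i)] :
    IsPureEmb S (canonicalB R S M L) := by
  classical
  constructor
  · intro x y hxy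
    refine hM ι' L inferInstance inferInstance ?_
    funext l
    exact congrFun hxy l
  · intro ι fι σ a ha
    letI := fι
    obtain ⟨b, hb⟩ := ha
    let Q : ι' → Type u := fun l =>
      (σ.ε → L l) ⧸ LinearMap.range (coefMap R S σ.B (W := L l))
    let rl : ∀ l, (σ.ε → ∀ l', L l') →ₗ[R] (σ.ε → L l) := fun l =>
      LinearMap.pi fun j => (LinearMap.proj l).comp (LinearMap.proj j)
    let q : (σ.ε → ∀ l, L l) →ₗ[R] ∀ l, Q l :=
      LinearMap.pi fun l =>
        (LinearMap.range (coefMap R S σ.B (W := L l))).mkQ.comp (rl l)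
    let pa : RTensor R M (ι → ∀ l, L l) :=
      ∑ i, mapB R (LinearMap.single R (fun _ : ι => ∀ l, L l) i) (a i)
    have hunpack : ∀ i, mapB R (LinearMap.proj i : (ι → ∀ l, L l) →ₗ[R] ∀ l, L l) pa
        = a i := by
      intro i
      rw [show pa = ∑ i, mapB R (LinearMap.single R (fun _ : ι => ∀ l, L l) i) (a i)
        from rfl, map_sum]
      rw [Finset.sum_eq_single i (fun i' _ hne => ?_) (fun h => absurd (Finset.mem_univ i) h)]
      · rw [← mapB_comp_apply, LinearMap.proj_comp_single_same R (fun _ : ι => ∀ l, L l) i]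
        exact mapB_id_apply R (a i)
      · rw [← mapB_comp_apply,
          LinearMap.proj_comp_single_ne R (fun _ : ι => ∀ l, L l) i i' (Ne.symm hne)]
        exact mapB_zero_apply R (a i')
    let c : RTensor R M (σ.ε → ∀ l, L l) :=
      mapB R (coefMap R S σ.A (W := ∀ l, L l)) pa
    have hcproj : ∀ j, mapB R (LinearMap.proj j : (σ.ε → ∀ l, L l) →ₗ[R] ∀ l, L l) c
        = ∑ i, op (σ.A i j) • a i := by
      intro j
      rw [show c = mapB R (coefMap R S σ.A (W := ∀ l, L l)) pa from rfl,
        mapB_proj_coefMap]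
      exact Finset.sum_congr rfl fun i _ => by rw [hunpack]
    have hsw : ∀ (l : ι') (s : Sᵐᵒᵖ) (x : RTensor R M (∀ l', L l')),
        mapB R (LinearMap.proj l : (∀ l', L l') →ₗ[R] L l) (s • x)
          = s • mapB R (LinearMap.proj l) x := by
      intro l s x
      rw [opSmul_mapB R (S := S), ← mapB_comp_apply,
        show (LinearMap.proj l : (∀ l', L l') →ₗ[R] L l).comp (sEndo R S s)
          = (sEndo R S s).comp (LinearMap.proj l) from LinearMap.ext fun _ => rfl,
        mapB_comp_apply, ← opSmul_mapB R]
    -- Claim 1 : the image of `c` in `M ⊗ ∏ Q l` maps to `0` in each `M ⊗ Q l`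
    have h0 : canonicalL R M Q (mapB R q c) = 0 := by
      funext l
      show mapB R (LinearMap.proj l) (mapB R q c) = 0
      rw [← mapB_comp_apply,
        show (LinearMap.proj l : (∀ l', Q l') →ₗ[R] Q l).comp q
          = (LinearMap.range (coefMap R S σ.B (W := L l))).mkQ.comp (rl l)
          from LinearMap.proj_pi _ _,
        mapB_comp_apply]
      have hu : ∀ j, mapB R (LinearMap.proj j : (σ.ε → L l) →ₗ[R] L l)
          (mapB R (rl l) c) = -∑ k, op (σ.B k j) • (b k l) := by
        intro j
        rw [← mapB_comp_apply,
          show (LinearMap.proj j : (σ.ε → L l) →ₗ[R] L l).comp (rl l)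
            = (LinearMap.proj l : (∀ l', L l') →ₗ[R] L l).comp (LinearMap.proj j)
            from LinearMap.proj_pi _ _,
          mapB_comp_apply, hcproj j, map_sum]
        rw [Finset.sum_congr rfl fun i _ => hsw l _ (a i)]
        have hbl := congrFun (hb j) l
        simp only [Finset.sum_apply, Pi.add_apply, Pi.smul_apply, Pi.zero_apply] at hbl
        have hcanon : ∀ i, (canonicalB R S M L (a i)) l
            = mapB R (LinearMap.proj l) (a i) := fun i => rfl
        simp only [hcanon] at hbl
        exact eq_neg_of_add_eq_zero_left hbl
      rw [mapB_pack_unpack R (mapB R (rl l) c), map_sum]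
      have hterm : ∀ j, mapB R (LinearMap.range (coefMap R S σ.B (W := L l))).mkQ
          (mapB R (LinearMap.single R (fun _ : σ.ε => L l) j)
            (mapB R (LinearMap.proj j) (mapB R (rl l) c)))
          = -∑ k, mapB R ((LinearMap.range (coefMap R S σ.B (W := L l))).mkQ ∘ₗ
              (LinearMap.single R (fun _ : σ.ε => L l) j) ∘ₗ
              sEndo R S (op (σ.B k j))) (b k l) := by
        intro j
        rw [hu j, map_neg, map_neg, map_sum, map_sum]
        congr 1
        refine Finset.sum_congr rfl fun k _ => ?_
        rw [opSmul_mapB R (S := S), ← mapB_comp_apply, ← mapB_comp_apply]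
        rfl
      rw [Finset.sum_congr rfl fun j _ => hterm j, Finset.sum_neg_distrib,
        Finset.sum_comm]
      rw [Finset.sum_congr rfl fun k (_ : k ∈ Finset.univ) =>
        (mapB_finsetSum_apply R Finset.univ _ (b k l)).symm]
      have hzero : ∀ k : σ.κ,
          (∑ j, (LinearMap.range (coefMap R S σ.B (W := L l))).mkQ ∘ₗ
            (LinearMap.single R (fun _ : σ.ε => L l) j) ∘ₗ
            sEndo R S (op (σ.B k j)))
          = (0 : L l →ₗ[R] Q l) := by
        intro k
        refine LinearMap.ext fun w => ?_
        simp only [LinearMap.sum_apply, LinearMap.comp_apply, LinearMap.coe_single,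
          LinearMap.zero_apply]
        rw [← map_sum, Finset.univ_sum_single (fun j => sEndo R S (op (σ.B k j)) w),
          Submodule.mkQ_apply, Submodule.Quotient.mk_eq_zero]
        refine ⟨Pi.single k w, ?_⟩
        funext j
        rw [coefMap_apply]
        rw [Finset.sum_eq_single k (fun k' _ hne => ?_)
          (fun h => absurd (Finset.mem_univ k) h)]
        · rw [Pi.single_eq_same]
          rfl
        · rw [Pi.single_eq_of_ne hne, smul_zero]
      rw [Finset.sum_congr rfl fun k (_ : k ∈ Finset.univ) => by rw [hzero k]]
      simp only [mapB_zero_apply, Finset.sum_const_zero, neg_zero]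
    -- Mittag-Leffler gives `mapB q c = 0`
    have hqc : mapB R q c = 0 :=
      hM ι' Q inferInstance inferInstance (h0.trans (map_zero (canonicalL R M Q)).symm)
    -- `coefMap σ.B` and `q` form an exact pair with `q` surjective
    have hexact : Function.Exact (coefMap R S σ.B (W := ∀ l, L l)) q := by
      intro x
      constructor
      · intro hx
        have hx' : ∀ l, rl l x ∈ LinearMap.range (coefMap R S σ.B (W := L l)) := by
          intro l
          have h := congrFun hx l
          rwa [show q x l = Submodule.Quotient.mk (rl l x) from rfl, Pi.zero_apply,
            Submodule.Quotient.mk_eq_zero] at h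
        choose y hy using hx'
        refine ⟨fun k l => y l k, ?_⟩
        funext j l
        rw [show coefMap R S σ.B (W := ∀ l', L l') (fun k l' => y l' k) j l
          = ((∑ t, op (σ.B t j) • fun l' => y l' t) : ∀ l', L l') l by
            rw [coefMap_apply]]
        simp only [Finset.sum_apply, Pi.smul_apply]
        have h := congrFun (hy l) j
        rw [coefMap_apply] at h
        exact h
      · rintro ⟨y, rfl⟩
        funext l
        rw [show q (coefMap R S σ.B (W := ∀ l', L l') y) l
            = Submodule.Quotient.mk (rl l (coefMap R S σ.B (W := ∀ l', L l') y))
            from rfl, Pi.zero_apply, Submodule.Quotient.mk_eq_zero]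
        refine ⟨fun k => y k l, ?_⟩
        funext j
        rw [coefMap_apply,
          show rl l (coefMap R S σ.B (W := ∀ l', L l') y) j
            = coefMap R S σ.B (W := ∀ l', L l') y j l from rfl,
          coefMap_apply]
        simp only [Finset.sum_apply, Pi.smul_apply]
    have hsurj : Function.Surjective q := by
      intro z
      have hv := fun l =>
        Submodule.Quotient.mk_surjective
          (LinearMap.range (coefMap R S σ.B (W := L l))) (z l)
      choose v hv using hv
      exact ⟨fun j l => v l j, funext fun l => hv l⟩
    obtain ⟨d, hd⟩ := rtensor_exact R (coefMap R S σ.B (W := ∀ l, L l)) q hexact hsurj c hqc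
    refine ⟨fun k =>
      -(mapB R (LinearMap.proj k : (σ.κ → ∀ l, L l) →ₗ[R] ∀ l, L l) d), fun j => ?_⟩
    have h1 : (∑ k, op (σ.B k j) •
        (-(mapB R (LinearMap.proj k : (σ.κ → ∀ l, L l) →ₗ[R] ∀ l, L l) d)))
        = -(∑ i, op (σ.A i j) • a i) := by
      rw [Finset.sum_congr rfl fun k (_ : k ∈ Finset.univ) =>
        smul_neg (op (σ.B k j)) _, Finset.sum_neg_distrib]
      have hkd := mapB_proj_coefMap R S σ.B d j
      rw [hd, hcproj j] at hkd
      rw [← hkd]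
    rw [h1, add_neg_cancel]

end MTM
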